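/- (Y-operation soundness) Let G be a finite graph with model E₃^T and x ∈ V ∖ T a vertex of degree 3 with neighbors a, b, c. Condition on the coloring of ax, bx, cx: if bx, cx share a color different from ax, connection probabilities equal those of G₁ = (G ∖ ax)/bx; if bx differs from ax, cx, they equal those of G₂ = (G ∖ bx)/cx; if cx differs from ax, bx, they equal those of G₃ = (G ∖ cx)/ax; if all three agree, they equal those of the hypergraph model G₄ where ax, bx, cx are constrained to a single uniform color. Hence P_G(u₀→v_j) = (1/4) Σ_{i=1}^{4} P_{G_i}(u₀→v_j). -/

import Mathlib

open scoped Classical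

noncomputable section

/-- Indicator of a proposition, as a real number. -/
def pInd (P : Prop) : ℝ := if P then 1 else 0

/-- A finite multigraph without loops on vertex set `V`. -/
structure Multigraph (V : Type) where
  E : Type
  fintypeE : Fintype E
  decEqE : DecidableEq E
  ends : E → Sym2 V
  not_isDiag : ∀ e, ¬ (ends e).IsDiag

attribute [instance] Multigraph.fintypeE Multigraph.decEqE

variable {V : Type}

/-- Colored presence graph of model E₃ on a multigraph: the copy of edge `e` lives in
the layer given by its color `c e`; vertical edges at `T`. -/
def Multigraph.ccGraph (M : Multigraph V) (c : M.E → Bool) (T : Set V) :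
    SimpleGraph (V × Bool) where
  Adj a b := (a.2 = b.2 ∧ ∃ e, M.ends e = s(a.1, b.1) ∧ c e = a.2) ∨
    (a.1 = b.1 ∧ a.2 ≠ b.2 ∧ a.1 ∈ T)
  symm := by
    constructor
    intro a b h
    rcases h with ⟨h1, e, he, hc⟩ | ⟨h1, h2, h3⟩
    · exact Or.inl ⟨h1.symm, e, by rwa [Sym2.eq_swap], by rwa [← h1]⟩
    · exact Or.inr ⟨h1.symm, Ne.symm h2, h1 ▸ h3⟩
  loopless := by
    constructor
    rintro a (⟨h1, e, he, hc⟩ | ⟨h1, h2, h3⟩)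
    · exact M.not_isDiag e (by rw [he]; exact Sym2.mk_isDiag_iff.mpr rfl)
    · exact h2 rfl

/-- Connection probability in model E₃^T on a multigraph. -/
def PE3M (M : Multigraph V) (T : Set V) (x y : V × Bool) : ℝ :=
  (∑ c : M.E → Bool, pInd ((M.ccGraph c T).Reachable x y)) / 2 ^ Fintype.card M.E

/-- Restriction of a multigraph to the edges satisfying `P` (edge deletion). -/
def Multigraph.restrict (M : Multigraph V) (P : M.E → Prop) : Multigraph V where
  E := {e : M.E // P e}
  fintypeE := Subtype.fintype _
  decEqE := inferInstance
  ends e := M.ends e.1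
  not_isDiag e := M.not_isDiag e.1

/-- Contraction of the vertex `x` into the vertex `y`: every edge endpoint equal to `x`
is renamed `y`, and the edges that become loops are removed. -/
def Multigraph.contract [DecidableEq V] (M : Multigraph V) (x y : V) : Multigraph V where
  E := {e : M.E // ¬ (Sym2.map (fun w => if w = x then y else w) (M.ends e)).IsDiag}
  fintypeE := Subtype.fintype _
  decEqE := inferInstance
  ends e := Sym2.map (fun w => if w = x then y else w) (M.ends e.1)
  not_isDiag e := e.2


/-- The coloring of the edges of `M` in which the three edges `ea, eb, ec` incident to
the degree-3 vertex `x` are constrained to share one common color (model E₄ with the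
block `{ea,eb,ec}` and singletons elsewhere). -/
def yColor (M : Multigraph V) (ea eb ec : M.E)
    (γ : ({e : M.E // e ≠ ea ∧ e ≠ eb ∧ e ≠ ec} ⊕ Unit) → Bool) : M.E → Bool :=
  fun e =>
    if h : e = ea ∨ e = eb ∨ e = ec then γ (Sum.inr ())
    else γ (Sum.inl ⟨e, by push_neg at h; exact h⟩)

/-- Connection probability in the hypergraph model E₄ where the star edges
`ea, eb, ec` form a single block (one uniform color). -/
def PE4y (M : Multigraph V) (ea eb ec : M.E) (T : Set V) (x y : V × Bool) : ℝ :=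
  (∑ γ : ({e : M.E // e ≠ ea ∧ e ≠ eb ∧ e ≠ ec} ⊕ Unit) → Bool,
      pInd ((M.ccGraph (yColor M ea eb ec γ) T).Reachable x y)) /
    2 ^ Fintype.card (({e : M.E // e ≠ ea ∧ e ≠ eb ∧ e ≠ ec} ⊕ Unit))

-- ======== auxiliary lemmas ========

lemma pInd_congr {P Q : Prop} (h : P ↔ Q) : pInd P = pInd Q := by
  simp [pInd, h]

lemma sym2_map_fix [DecidableEq V] {x y : V} {s : Sym2 V} (hx : x ∉ s) :
    Sym2.map (fun w => if w = x then y else w) s = s := by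
  induction s using Sym2.ind with
  | _ p q =>
    rw [Sym2.map_pair_eq, if_neg, if_neg]
    · intro h; exact hx (h ▸ Sym2.mem_mk_right p q)
    · intro h; exact hx (h ▸ Sym2.mem_mk_left p q)

/-- In the situation of the Y-operation, the edges of the contracted graph
`(M ∖ ea)/(x→b)` correspond to edges `e ≠ ea, e ≠ eb`. -/
lemma contract_ndiag_iff [DecidableEq V] (M : Multigraph V) (x a b c : V)
    (hab : a ≠ b) (hbc : b ≠ c)
    (ea eb ec : M.E)
    (hendsa : M.ends ea = s(a, x)) (hendsb : M.ends eb = s(b, x))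
    (hendsc : M.ends ec = s(c, x))
    (hdeg : ∀ e : M.E, x ∈ M.ends e → e = ea ∨ e = eb ∨ e = ec)
    (e : M.E) (hea : e ≠ ea) :
    ¬ (Sym2.map (fun w => if w = x then b else w) (M.ends e)).IsDiag ↔ e ≠ eb := by
  have hbx : b ≠ x := fun h => M.not_isDiag eb (by rw [hendsb, h]; exact Sym2.mk_isDiag_iff.mpr rfl)
  have hcx : c ≠ x := fun h => M.not_isDiag ec (by rw [hendsc, h]; exact Sym2.mk_isDiag_iff.mpr rfl)
  constructor
  · intro hd heb
    apply hd
    rw [heb, hendsb, Sym2.map_pair_eq, if_neg hbx, if_pos rfl]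
    exact Sym2.mk_isDiag_iff.mpr rfl
  · intro heb
    by_cases hec : e = ec
    · rw [hec, hendsc, Sym2.map_pair_eq, if_neg hcx, if_pos rfl]
      intro h
      exact hbc (Sym2.mk_isDiag_iff.mp h).symm
    · have hx : x ∉ M.ends e := by
        intro hx
        rcases hdeg e hx with h | h | h <;> [exact hea h; exact heb h; exact hec h]
      rw [sym2_map_fix hx]
      exact M.not_isDiag e

/-- Reachability transfer for the Y-operation: given the minority color on `ea`,
reachability between vertices away from `x` in `M` equals that in `(M ∖ ea)/(x→b)`. -/
lemma reach_transfer [DecidableEq V] (M : Multigraph V) (T : Set V)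
    (x a b c : V) (hxT : x ∉ T) (hab : a ≠ b) (hac : a ≠ c) (hbc : b ≠ c)
    (ea eb ec : M.E) (hab' : ea ≠ eb) (hac' : ea ≠ ec) (hbc' : eb ≠ ec)
    (hendsa : M.ends ea = s(a, x)) (hendsb : M.ends eb = s(b, x))
    (hendsc : M.ends ec = s(c, x))
    (hdeg : ∀ e : M.E, x ∈ M.ends e → e = ea ∨ e = eb ∨ e = ec)
    (cl : M.E → Bool) (h1 : cl eb = cl ec) (h2 : cl ea ≠ cl eb)
    (u v : V × Bool) (hu : u.1 ≠ x) (hv : v.1 ≠ x) :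
    (M.ccGraph cl T).Reachable u v ↔
    (((M.restrict (fun e => e ≠ ea)).contract x b).ccGraph
      (fun e => cl e.1.1) T).Reachable u v := by
  have hax : a ≠ x := fun h => M.not_isDiag ea (by rw [hendsa, h]; exact Sym2.mk_isDiag_iff.mpr rfl)
  have hbx : b ≠ x := fun h => M.not_isDiag eb (by rw [hendsb, h]; exact Sym2.mk_isDiag_iff.mpr rfl)
  have hcx : c ≠ x := fun h => M.not_isDiag ec (by rw [hendsc, h]; exact Sym2.mk_isDiag_iff.mpr rfl)
  set β := cl eb with hβ
  set G₁ := (M.restrict (fun e => e ≠ ea)).contract x b with hG₁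
  set cl₁ : G₁.E → Bool := fun e => cl e.1.1 with hcl₁
  set f : V × Bool → V × Bool := fun p => if p.1 = x then ((if p.2 = β then b else a), p.2) else p
    with hf
  have hfix : ∀ p : V × Bool, p.1 ≠ x → f p = p := by
    intro p hp; simp [hf, hp]
  -- the edge `ec` survives in G₁
  have hecG : (ec : M.E) ≠ ea := hac'.symm
  have hecnd : ¬ (Sym2.map (fun w => if w = x then b else w)
      ((M.restrict (fun e => e ≠ ea)).ends ⟨ec, hecG⟩)).IsDiag := by
    show ¬ (Sym2.map _ (M.ends ec)).IsDiag
    rw [hendsc, Sym2.map_pair_eq, if_neg hcx, if_pos rfl]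
    intro h; exact hbc (Sym2.mk_isDiag_iff.mp h).symm
  have hecEnds : G₁.ends ⟨⟨ec, hecG⟩, hecnd⟩ = s(c, b) := by
    show Sym2.map _ (M.ends ec) = _
    rw [hendsc, Sym2.map_pair_eq, if_neg hcx, if_pos rfl]
  -- forward: every adjacency in M maps to reachability in G₁ (after f)
  have fwd : ∀ p q : V × Bool, (M.ccGraph cl T).Adj p q →
      (G₁.ccGraph cl₁ T).Reachable (f p) (f q) := by
    rintro p q (⟨hpq, e, he, hce⟩ | ⟨hpq, hne, hT⟩)
    · by_cases hea : e = ea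
      · -- the minority edge : f p = f q
        have he' : s(a, x) = s(p.1, q.1) := by rw [← hendsa, ← hea]; exact he
        have hce' : cl ea = p.2 := hea ▸ hce
        have hcol : p.2 ≠ β := hce' ▸ h2
        have hcol' : q.2 ≠ β := hpq ▸ hcol
        rcases Sym2.eq_iff.mp he' with ⟨hp, hq⟩ | ⟨hp, hq⟩
        · have h3 : f p = p := hfix p (fun h => hax (hp.trans h))
          have h4 : f q = (a, q.2) := by simp [hf, ← hq, hcol']
          have h5 : p = (a, q.2) := Prod.ext hp.symm hpq
          rw [h3, h4, h5]
        · have h3 : f q = q := hfix q (fun h => hax (hp.trans h))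
          have h4 : f p = (a, p.2) := by simp [hf, ← hq, hcol]
          have h5 : q = (a, p.2) := Prod.ext hp.symm hpq.symm
          rw [h3, h4, h5]
      · by_cases heb : e = eb
        · have he' : s(b, x) = s(p.1, q.1) := by rw [← hendsb, ← heb]; exact he
          have hce' : cl eb = p.2 := heb ▸ hce
          have hcol : p.2 = β := hce'.symm
          have hcol' : q.2 = β := hpq ▸ hcol
          rcases Sym2.eq_iff.mp he' with ⟨hp, hq⟩ | ⟨hp, hq⟩
          · have h3 : f p = p := hfix p (fun h => hbx (hp.trans h))
            have h4 : f q = (b, q.2) := by simp [hf, ← hq, hcol']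
            have h5 : p = (b, q.2) := Prod.ext hp.symm hpq
            rw [h3, h4, h5]
          · have h3 : f q = q := hfix q (fun h => hbx (hp.trans h))
            have h4 : f p = (b, p.2) := by simp [hf, ← hq, hcol]
            have h5 : q = (b, p.2) := Prod.ext hp.symm hpq.symm
            rw [h3, h4, h5]
        · by_cases hec : e = ec
          · have he' : s(c, x) = s(p.1, q.1) := by rw [← hendsc, ← hec]; exact he
            have hce' : cl ec = p.2 := hec ▸ hce
            have hcol : p.2 = β := by rw [← hce', ← h1]
            have hcol' : q.2 = β := hpq ▸ hcol
            have hadj : (G₁.ccGraph cl₁ T).Adj (c, β) (b, β) :=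
              Or.inl ⟨rfl, ⟨⟨ec, hecG⟩, hecnd⟩, hecEnds, h1.symm⟩
            rcases Sym2.eq_iff.mp he' with ⟨hp, hq⟩ | ⟨hp, hq⟩
            · have h3 : f p = (c, β) := by
                rw [hfix p (fun h => hcx (hp.trans h))]; exact Prod.ext hp.symm hcol
              have h4 : f q = (b, β) := by simp [hf, ← hq, hcol']
              rw [h3, h4]; exact hadj.reachable
            · have h3 : f q = (c, β) := by
                rw [hfix q (fun h => hcx (hp.trans h))]; exact Prod.ext hp.symm hcol'
              have h4 : f p = (b, β) := by simp [hf, ← hq, hcol]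
              rw [h3, h4]; exact hadj.symm.reachable
          · -- generic edge
            have hx : x ∉ M.ends e := fun hx => by
              rcases hdeg e hx with h | h | h <;> [exact hea h; exact heb h; exact hec h]
            have hpx : p.1 ≠ x := fun h => hx (by rw [he, ← h]; exact Sym2.mem_mk_left _ _)
            have hqx : q.1 ≠ x := fun h => hx (by rw [he, ← h]; exact Sym2.mem_mk_right _ _)
            rw [hfix p hpx, hfix q hqx]
            have hnd : ¬ (Sym2.map (fun w => if w = x then b else w)
                ((M.restrict (fun e => e ≠ ea)).ends ⟨e, hea⟩)).IsDiag := by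
              show ¬ (Sym2.map _ (M.ends e)).IsDiag
              rw [sym2_map_fix hx]; exact M.not_isDiag e
            refine (SimpleGraph.Adj.reachable ?_)
            refine Or.inl ⟨hpq, ⟨⟨e, hea⟩, hnd⟩, ?_, hce⟩
            show Sym2.map _ (M.ends e) = _
            rw [sym2_map_fix hx]; exact he
    · -- vertical
      have hpx : p.1 ≠ x := fun h => hxT (h ▸ hT)
      have hqx : q.1 ≠ x := hpq ▸ hpx
      rw [hfix p hpx, hfix q hqx]
      exact (SimpleGraph.Adj.reachable (Or.inr ⟨hpq, hne, hT⟩))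
  have bwd : ∀ p q : V × Bool, (G₁.ccGraph cl₁ T).Adj p q →
      (M.ccGraph cl T).Reachable p q := by
    rintro p q (⟨hpq, e, he, hce⟩ | ⟨hpq, hne, hT⟩)
    · obtain ⟨⟨e, hea⟩, hnd⟩ := e
      have heb : e ≠ eb := by
        intro h
        apply hnd
        show (Sym2.map _ (M.ends e)).IsDiag
        rw [h, hendsb, Sym2.map_pair_eq, if_neg hbx, if_pos rfl]
        exact Sym2.mk_isDiag_iff.mpr rfl
      by_cases hec : e = ec
      · subst hec
        have hse : s(c, b) = s(p.1, q.1) := by rw [← hecEnds]; exact he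
        have hcol : p.2 = β := by
          rw [← hce]; exact h1.symm
        have adj1 : (M.ccGraph cl T).Adj (c, β) (x, β) :=
          Or.inl ⟨rfl, e, by rw [hendsc], h1.symm⟩
        have adj2 : (M.ccGraph cl T).Adj (x, β) (b, β) :=
          Or.inl ⟨rfl, eb, by rw [hendsb, Sym2.eq_swap], rfl⟩
        rcases Sym2.eq_iff.mp hse with ⟨hp, hq⟩ | ⟨hp, hq⟩
        · have hpp : p = (c, β) := Prod.ext hp.symm hcol
          have hqq : q = (b, β) := Prod.ext hq.symm (hpq ▸ hcol)
          rw [hpp, hqq]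
          exact (adj1.reachable).trans adj2.reachable
        · have hpp : p = (b, β) := Prod.ext hq.symm hcol
          have hqq : q = (c, β) := Prod.ext hp.symm (hpq ▸ hcol)
          rw [hpp, hqq]
          exact (adj2.symm.reachable).trans adj1.symm.reachable
      · have hx : x ∉ M.ends e := fun hx => by
          rcases hdeg e hx with h | h | h <;> [exact hea h; exact heb h; exact hec h]
        have he' : M.ends e = s(p.1, q.1) := by
          rw [← sym2_map_fix (y := b) hx]; exact he
        exact (SimpleGraph.Adj.reachable (Or.inl ⟨hpq, e, he', hce⟩))
    · exact (SimpleGraph.Adj.reachable (Or.inr ⟨hpq, hne, hT⟩))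
  constructor
  · rintro ⟨w⟩
    have : (G₁.ccGraph cl₁ T).Reachable (f u) (f v) := by
      clear hu hv
      induction w with
      | nil => exact SimpleGraph.Reachable.refl _
      | cons h p ih => exact (fwd _ _ h).trans ih
    rwa [hfix u hu, hfix v hv] at this
  · rintro ⟨w⟩
    clear hu hv
    induction w with
    | nil => exact SimpleGraph.Reachable.refl _
    | cons h p ih => exact (bwd _ _ h).trans ih

/-- The conditional pattern sum equals the numerator of the contracted model. -/
lemma pattern_sum [DecidableEq V] (M : Multigraph V) (T : Set V)
    (x a b c : V) (hxT : x ∉ T) (hab : a ≠ b) (hac : a ≠ c) (hbc : b ≠ c)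
    (ea eb ec : M.E) (hab' : ea ≠ eb) (hac' : ea ≠ ec) (hbc' : eb ≠ ec)
    (hendsa : M.ends ea = s(a, x)) (hendsb : M.ends eb = s(b, x))
    (hendsc : M.ends ec = s(c, x))
    (hdeg : ∀ e : M.E, x ∈ M.ends e → e = ea ∨ e = eb ∨ e = ec)
    (u v : V × Bool) (hu : u.1 ≠ x) (hv : v.1 ≠ x) :
    (∑ cl : M.E → Bool, if cl eb = cl ec ∧ cl ea ≠ cl eb then
        pInd ((M.ccGraph cl T).Reachable u v) else 0)
    = ∑ d : ((M.restrict (fun e => e ≠ ea)).contract x b).E → Bool,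
        pInd (((((M.restrict (fun e => e ≠ ea)).contract x b)).ccGraph d T).Reachable u v) := by
  set G₁ := (M.restrict (fun e => e ≠ ea)).contract x b with hG₁
  have hcx : c ≠ x := fun h => M.not_isDiag ec (by rw [hendsc, h]; exact Sym2.mk_isDiag_iff.mpr rfl)
  have hbx : b ≠ x := fun h => M.not_isDiag eb (by rw [hendsb, h]; exact Sym2.mk_isDiag_iff.mpr rfl)
  set eC : G₁.E := ⟨⟨ec, hac'.symm⟩, (contract_ndiag_iff M x a b c hab hbc ea eb ec
    hendsa hendsb hendsc hdeg ec hac'.symm).mpr hbc'.symm⟩ with heC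
  set Ψ : (M.E → Bool) → (G₁.E → Bool) := fun cl e => cl e.1.1 with hΨ
  set Φ : (G₁.E → Bool) → (M.E → Bool) := fun d e =>
    if hA : e = ea then ! d eC else if hB : e = eb then d eC
    else d ⟨⟨e, hA⟩, (contract_ndiag_iff M x a b c hab hbc ea eb ec
      hendsa hendsb hendsc hdeg e hA).mpr hB⟩ with hΦ
  have hΦa : ∀ d, Φ d ea = ! d eC := fun d => by simp [hΦ]
  have hΦb : ∀ d, Φ d eb = d eC := fun d => by simp [hΦ, hab'.symm]
  have hΦc : ∀ d, Φ d ec = d eC := by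
    intro d
    simp only [hΦ, dif_neg hac'.symm, dif_neg hbc'.symm]
    rfl
  rw [← Finset.sum_filter]
  refine Finset.sum_nbij' Ψ Φ (fun _ _ => Finset.mem_univ _) ?_ ?_ ?_ ?_
  · -- Φ lands in the filter
    intro d _
    rw [Finset.mem_filter]
    refine ⟨Finset.mem_univ _, ?_, ?_⟩
    · rw [hΦb, hΦc]
    · rw [hΦa, hΦb]; exact Bool.not_ne_self _
  · -- left inverse
    intro cl hcl
    rw [Finset.mem_filter] at hcl
    obtain ⟨-, hbc2, hneq⟩ := hcl
    funext e
    by_cases hA : e = ea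
    · subst hA
      rw [hΦa]
      have : Ψ cl eC = cl ec := rfl
      rw [this]
      cases h1 : cl e <;> cases h2 : cl eb <;> cases h3 : cl ec <;> simp_all
    · by_cases hB : e = eb
      · subst hB
        rw [hΦb]
        show cl ec = cl e
        exact hbc2.symm
      · show Φ (Ψ cl) e = cl e
        simp only [hΦ, dif_neg hA, dif_neg hB]
        rfl
  · -- right inverse
    intro d _
    funext e'
    have hA : e'.1.1 ≠ ea := e'.1.2
    have hB : e'.1.1 ≠ eb :=
      (contract_ndiag_iff M x a b c hab hbc ea eb ec hendsa hendsb hendsc hdeg e'.1.1 hA).mp e'.2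
    show Φ d e'.1.1 = d e'
    simp only [hΦ, dif_neg hA, dif_neg hB]
    exact congrArg d (Subtype.ext (Subtype.ext rfl))
  · -- values agree
    intro cl hcl
    rw [Finset.mem_filter] at hcl
    exact pInd_congr (reach_transfer M T x a b c hxT hab hac hbc ea eb ec hab' hac' hbc'
      hendsa hendsb hendsc hdeg cl hcl.2.1 hcl.2.2 u v hu hv)

lemma card_contract [DecidableEq V] (M : Multigraph V) (x a b c : V)
    (hab : a ≠ b) (hbc : b ≠ c)
    (ea eb ec : M.E) (hab' : ea ≠ eb)
    (hendsa : M.ends ea = s(a, x)) (hendsb : M.ends eb = s(b, x))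
    (hendsc : M.ends ec = s(c, x))
    (hdeg : ∀ e : M.E, x ∈ M.ends e → e = ea ∨ e = eb ∨ e = ec) :
    Fintype.card ((M.restrict (fun e => e ≠ ea)).contract x b).E
      = Fintype.card M.E - 2 := by
  have hequiv : ((M.restrict (fun e => e ≠ ea)).contract x b).E ≃
      {e : M.E // e ≠ ea ∧ e ≠ eb} :=
  { toFun := fun e' => ⟨e'.1.1, e'.1.2,
      (contract_ndiag_iff M x a b c hab hbc ea eb ec hendsa hendsb hendsc hdeg
        e'.1.1 e'.1.2).mp e'.2⟩
    invFun := fun e => ⟨⟨e.1, e.2.1⟩,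
      (contract_ndiag_iff M x a b c hab hbc ea eb ec hendsa hendsb hendsc hdeg
        e.1 e.2.1).mpr e.2.2⟩
    left_inv := fun e' => Subtype.ext (Subtype.ext rfl)
    right_inv := fun e => Subtype.ext rfl }
  rw [Fintype.card_congr hequiv, Fintype.card_subtype]
  have : Finset.univ.filter (fun e : M.E => e ≠ ea ∧ e ≠ eb)
      = Finset.univ \ {ea, eb} := by
    ext e
    simp only [Finset.mem_filter, Finset.mem_univ, true_and, Finset.mem_sdiff,
      Finset.mem_insert, Finset.mem_singleton]
    tauto
  rw [this, Finset.card_sdiff_of_subset (Finset.subset_univ _), Finset.card_univ]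
  congr 1
  rw [Finset.card_insert_of_notMem (by simp [hab']), Finset.card_singleton]

lemma card_three_le [DecidableEq V] (M : Multigraph V)
    (ea eb ec : M.E) (hab' : ea ≠ eb) (hac' : ea ≠ ec) (hbc' : eb ≠ ec) :
    3 ≤ Fintype.card M.E := by
  have : ({ea, eb, ec} : Finset M.E).card = 3 := by
    rw [Finset.card_insert_of_notMem (by simp [hab', hac']),
      Finset.card_insert_of_notMem (by simp [hbc']), Finset.card_singleton]
  calc 3 = ({ea, eb, ec} : Finset M.E).card := this.symm
    _ ≤ Fintype.card M.E := Finset.card_le_univ _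

lemma card_y [DecidableEq V] (M : Multigraph V)
    (ea eb ec : M.E) (hab' : ea ≠ eb) (hac' : ea ≠ ec) (hbc' : eb ≠ ec) :
    Fintype.card ({e : M.E // e ≠ ea ∧ e ≠ eb ∧ e ≠ ec} ⊕ Unit)
      = Fintype.card M.E - 2 := by
  rw [Fintype.card_sum, Fintype.card_unit, Fintype.card_subtype]
  have : Finset.univ.filter (fun e : M.E => e ≠ ea ∧ e ≠ eb ∧ e ≠ ec)
      = Finset.univ \ {ea, eb, ec} := by
    ext e
    simp only [Finset.mem_filter, Finset.mem_univ, true_and, Finset.mem_sdiff,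
      Finset.mem_insert, Finset.mem_singleton]
    tauto
  rw [this, Finset.card_sdiff_of_subset (Finset.subset_univ _), Finset.card_univ]
  have h3 : ({ea, eb, ec} : Finset M.E).card = 3 := by
    rw [Finset.card_insert_of_notMem (by simp [hab', hac']),
      Finset.card_insert_of_notMem (by simp [hbc']), Finset.card_singleton]
  rw [h3]
  have := card_three_le M ea eb ec hab' hac' hbc'
  omega

lemma pattern_sum_y [DecidableEq V] (M : Multigraph V) (T : Set V)
    (ea eb ec : M.E) (hab' : ea ≠ eb) (hac' : ea ≠ ec) (hbc' : eb ≠ ec)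
    (u v : V × Bool) :
    (∑ cl : M.E → Bool, if cl ea = cl eb ∧ cl eb = cl ec then
        pInd ((M.ccGraph cl T).Reachable u v) else 0)
    = ∑ γ : ({e : M.E // e ≠ ea ∧ e ≠ eb ∧ e ≠ ec} ⊕ Unit) → Bool,
        pInd ((M.ccGraph (yColor M ea eb ec γ) T).Reachable u v) := by
  set Ψ : (M.E → Bool) → (({e : M.E // e ≠ ea ∧ e ≠ eb ∧ e ≠ ec} ⊕ Unit) → Bool) :=
    fun cl => Sum.elim (fun e => cl e.1) (fun _ => cl ea) with hΨ
  have hyA : ∀ γ, yColor M ea eb ec γ ea = γ (Sum.inr ()) := fun γ => by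
    simp [yColor]
  have hyB : ∀ γ, yColor M ea eb ec γ eb = γ (Sum.inr ()) := fun γ => by
    simp [yColor]
  have hyC : ∀ γ, yColor M ea eb ec γ ec = γ (Sum.inr ()) := fun γ => by
    simp [yColor]
  have left_inv : ∀ cl : M.E → Bool, (cl ea = cl eb ∧ cl eb = cl ec) →
      yColor M ea eb ec (Ψ cl) = cl := by
    intro cl ⟨h1, h2⟩
    funext e
    by_cases h : e = ea ∨ e = eb ∨ e = ec
    · rw [yColor, dif_pos h]
      show cl ea = cl e
      rcases h with rfl | rfl | rfl
      · rfl
      · exact h1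
      · exact h1.trans h2
    · rw [yColor, dif_neg h]
      rfl
  rw [← Finset.sum_filter]
  refine Finset.sum_nbij' Ψ (yColor M ea eb ec) (fun _ _ => Finset.mem_univ _) ?_ ?_ ?_ ?_
  · intro γ _
    rw [Finset.mem_filter]
    exact ⟨Finset.mem_univ _, by rw [hyA, hyB], by rw [hyB, hyC]⟩
  · intro cl hcl
    rw [Finset.mem_filter] at hcl
    exact left_inv cl hcl.2
  · intro γ _
    funext z
    rcases z with e | u
    · have h : ¬ (e.1 = ea ∨ e.1 = eb ∨ e.1 = ec) := by
        push_neg; exact e.2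
      show yColor M ea eb ec γ e.1 = γ (Sum.inl e)
      rw [yColor, dif_neg h]
    · show yColor M ea eb ec γ ea = γ (Sum.inr u)
      rw [hyA]
  · intro cl hcl
    rw [Finset.mem_filter] at hcl
    rw [left_inv cl hcl.2]

/-- Y-operation: for a degree-3 vertex `x ∉ T` with neighbors `a, b, c` and incident
edges `ea = ax`, `eb = bx`, `ec = cx`, conditioning on the color pattern of the star
reduces the E₃ connection probabilities of `G` to those of `G₁ = (G ∖ ax)/bx`,
`G₂ = (G ∖ bx)/cx`, `G₃ = (G ∖ cx)/ax` and of the hypergraph model `G₄` where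
`ax, bx, cx` share one uniform color; hence `P_G = (Σᵢ P_{Gᵢ})/4`. -/
theorem PE3M_Y_operation [DecidableEq V] (M : Multigraph V) (T : Set V)
    (x a b c u v : V) (hxT : x ∉ T) (hxu : x ≠ u) (hxv : x ≠ v)
    (hab : a ≠ b) (hac : a ≠ c) (hbc : b ≠ c)
    (ea eb ec : M.E) (hab' : ea ≠ eb) (hac' : ea ≠ ec) (hbc' : eb ≠ ec)
    (hendsa : M.ends ea = s(a, x)) (hendsb : M.ends eb = s(b, x))
    (hendsc : M.ends ec = s(c, x))
    (hdeg : ∀ e : M.E, x ∈ M.ends e → e = ea ∨ e = eb ∨ e = ec)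
    (j : Bool) :
    ((∑ cl : M.E → Bool,
        if cl eb = cl ec ∧ cl ea ≠ cl eb then
          pInd ((M.ccGraph cl T).Reachable (u, false) (v, j)) else 0) /
      2 ^ (Fintype.card M.E - 2) =
      PE3M ((M.restrict (fun e => e ≠ ea)).contract x b) T (u, false) (v, j)) ∧
    ((∑ cl : M.E → Bool,
        if cl ea = cl ec ∧ cl eb ≠ cl ea then
          pInd ((M.ccGraph cl T).Reachable (u, false) (v, j)) else 0) /
      2 ^ (Fintype.card M.E - 2) =
      PE3M ((M.restrict (fun e => e ≠ eb)).contract x c) T (u, false) (v, j)) ∧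
    ((∑ cl : M.E → Bool,
        if cl ea = cl eb ∧ cl ec ≠ cl ea then
          pInd ((M.ccGraph cl T).Reachable (u, false) (v, j)) else 0) /
      2 ^ (Fintype.card M.E - 2) =
      PE3M ((M.restrict (fun e => e ≠ ec)).contract x a) T (u, false) (v, j)) ∧
    ((∑ cl : M.E → Bool,
        if cl ea = cl eb ∧ cl eb = cl ec then
          pInd ((M.ccGraph cl T).Reachable (u, false) (v, j)) else 0) /
      2 ^ (Fintype.card M.E - 2) =
      PE4y M ea eb ec T (u, false) (v, j)) ∧
    (PE3M M T (u, false) (v, j) =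
      (PE3M ((M.restrict (fun e => e ≠ ea)).contract x b) T (u, false) (v, j) +
        PE3M ((M.restrict (fun e => e ≠ eb)).contract x c) T (u, false) (v, j) +
        PE3M ((M.restrict (fun e => e ≠ ec)).contract x a) T (u, false) (v, j) +
        PE4y M ea eb ec T (u, false) (v, j)) / 4) := by
  have hu : ((u, false) : V × Bool).1 ≠ x := fun h => hxu h.symm
  have hv : ((v, j) : V × Bool).1 ≠ x := fun h => hxv h.symm
  have hdeg2 : ∀ e : M.E, x ∈ M.ends e → e = eb ∨ e = ec ∨ e = ea := by
    intro e h; rcases hdeg e h with h | h | h <;> tauto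
  have hdeg3 : ∀ e : M.E, x ∈ M.ends e → e = ec ∨ e = ea ∨ e = eb := by
    intro e h; rcases hdeg e h with h | h | h <;> tauto
  have p1 : (∑ cl : M.E → Bool,
        if cl eb = cl ec ∧ cl ea ≠ cl eb then
          pInd ((M.ccGraph cl T).Reachable (u, false) (v, j)) else 0) /
      2 ^ (Fintype.card M.E - 2) =
      PE3M ((M.restrict (fun e => e ≠ ea)).contract x b) T (u, false) (v, j) := by
    simp only [PE3M]
    rw [card_contract M x a b c hab hbc ea eb ec hab' hendsa hendsb hendsc hdeg,
      pattern_sum M T x a b c hxT hab hac hbc ea eb ec hab' hac' hbc'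
        hendsa hendsb hendsc hdeg (u, false) (v, j) hu hv]
  have p2 : (∑ cl : M.E → Bool,
        if cl ea = cl ec ∧ cl eb ≠ cl ea then
          pInd ((M.ccGraph cl T).Reachable (u, false) (v, j)) else 0) /
      2 ^ (Fintype.card M.E - 2) =
      PE3M ((M.restrict (fun e => e ≠ eb)).contract x c) T (u, false) (v, j) := by
    simp only [PE3M]
    rw [card_contract M x b c a hbc hac.symm eb ec ea hbc' hendsb hendsc hendsa hdeg2]
    rw [show (∑ cl : M.E → Bool,
        if cl ea = cl ec ∧ cl eb ≠ cl ea then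
          pInd ((M.ccGraph cl T).Reachable (u, false) (v, j)) else 0)
      = (∑ cl : M.E → Bool,
        if cl ec = cl ea ∧ cl eb ≠ cl ec then
          pInd ((M.ccGraph cl T).Reachable (u, false) (v, j)) else 0) from
      Finset.sum_congr rfl (fun cl _ => if_congr
        ⟨fun ⟨h1, h2⟩ => ⟨h1.symm, fun hh => h2 (hh.trans h1.symm)⟩,
         fun ⟨h1, h2⟩ => ⟨h1.symm, fun hh => h2 (hh.trans h1.symm)⟩⟩ rfl rfl)]
    rw [pattern_sum M T x b c a hxT hbc hab.symm hac.symm eb ec ea hbc' hab'.symm hac'.symm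
        hendsb hendsc hendsa hdeg2 (u, false) (v, j) hu hv]
  have p3 : (∑ cl : M.E → Bool,
        if cl ea = cl eb ∧ cl ec ≠ cl ea then
          pInd ((M.ccGraph cl T).Reachable (u, false) (v, j)) else 0) /
      2 ^ (Fintype.card M.E - 2) =
      PE3M ((M.restrict (fun e => e ≠ ec)).contract x a) T (u, false) (v, j) := by
    simp only [PE3M]
    rw [card_contract M x c a b hac.symm hab ec ea eb hac'.symm hendsc hendsa hendsb hdeg3,
      pattern_sum M T x c a b hxT hac.symm hbc.symm hab ec ea eb hac'.symm hbc'.symm hab'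
        hendsc hendsa hendsb hdeg3 (u, false) (v, j) hu hv]
  have p4 : (∑ cl : M.E → Bool,
        if cl ea = cl eb ∧ cl eb = cl ec then
          pInd ((M.ccGraph cl T).Reachable (u, false) (v, j)) else 0) /
      2 ^ (Fintype.card M.E - 2) =
      PE4y M ea eb ec T (u, false) (v, j) := by
    simp only [PE4y]
    rw [card_y M ea eb ec hab' hac' hbc',
      pattern_sum_y M T ea eb ec hab' hac' hbc' (u, false) (v, j)]
  refine ⟨p1, p2, p3, p4, ?_⟩
  set P1 := PE3M ((M.restrict (fun e => e ≠ ea)).contract x b) T (u, false) (v, j) with hP1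
  set P2 := PE3M ((M.restrict (fun e => e ≠ eb)).contract x c) T (u, false) (v, j) with hP2
  set P3 := PE3M ((M.restrict (fun e => e ≠ ec)).contract x a) T (u, false) (v, j) with hP3
  set P4 := PE4y M ea eb ec T (u, false) (v, j) with hP4
  have hD : (0:ℝ) < 2 ^ (Fintype.card M.E - 2) := by positivity
  have e1 := (div_eq_iff (ne_of_gt hD)).mp p1
  have e2 := (div_eq_iff (ne_of_gt hD)).mp p2
  have e3 := (div_eq_iff (ne_of_gt hD)).mp p3
  have e4 := (div_eq_iff (ne_of_gt hD)).mp p4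
  have hsplit : ∀ cl : M.E → Bool,
      pInd ((M.ccGraph cl T).Reachable (u, false) (v, j)) =
      (if cl eb = cl ec ∧ cl ea ≠ cl eb then
          pInd ((M.ccGraph cl T).Reachable (u, false) (v, j)) else 0) +
      ((if cl ea = cl ec ∧ cl eb ≠ cl ea then
          pInd ((M.ccGraph cl T).Reachable (u, false) (v, j)) else 0) +
      ((if cl ea = cl eb ∧ cl ec ≠ cl ea then
          pInd ((M.ccGraph cl T).Reachable (u, false) (v, j)) else 0) +
      (if cl ea = cl eb ∧ cl eb = cl ec then
          pInd ((M.ccGraph cl T).Reachable (u, false) (v, j)) else 0))) := by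
    intro cl
    cases h1 : cl ea <;> cases h2 : cl eb <;> cases h3 : cl ec <;> simp [h1, h2, h3]
  have key : (∑ cl : M.E → Bool, pInd ((M.ccGraph cl T).Reachable (u, false) (v, j)))
      = (∑ cl : M.E → Bool,
        if cl eb = cl ec ∧ cl ea ≠ cl eb then
          pInd ((M.ccGraph cl T).Reachable (u, false) (v, j)) else 0)
      + ((∑ cl : M.E → Bool,
        if cl ea = cl ec ∧ cl eb ≠ cl ea then
          pInd ((M.ccGraph cl T).Reachable (u, false) (v, j)) else 0)
      + ((∑ cl : M.E → Bool,
        if cl ea = cl eb ∧ cl ec ≠ cl ea then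
          pInd ((M.ccGraph cl T).Reachable (u, false) (v, j)) else 0)
      + (∑ cl : M.E → Bool,
        if cl ea = cl eb ∧ cl eb = cl ec then
          pInd ((M.ccGraph cl T).Reachable (u, false) (v, j)) else 0))) := by
    rw [← Finset.sum_add_distrib, ← Finset.sum_add_distrib, ← Finset.sum_add_distrib]
    exact Finset.sum_congr rfl (fun cl _ => hsplit cl)
  have hn3 : 3 ≤ Fintype.card M.E := card_three_le M ea eb ec hab' hac' hbc'
  have hpow : (2:ℝ) ^ Fintype.card M.E = 2 ^ (Fintype.card M.E - 2) * 4 := by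
    have h : Fintype.card M.E - 2 + 2 = Fintype.card M.E := by omega
    calc (2:ℝ) ^ Fintype.card M.E = 2 ^ (Fintype.card M.E - 2 + 2) := by rw [h]
      _ = 2 ^ (Fintype.card M.E - 2) * 2 ^ 2 := by rw [pow_add]
      _ = 2 ^ (Fintype.card M.E - 2) * 4 := by norm_num
  simp only [PE3M]
  rw [key, e1, e2, e3, e4, hpow]
  field_simp
  ring


end
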